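/- Let A be a nondeterministic finite automaton with state set Q. If L(A) contains, for every n, a word of the form u₀y₁ⁿu₁⋯u_{p−1}y_pⁿu_p with c(yᵢ) = Bᵢ (i.e., L(A) meets u₀(B₁!)ⁿ⋯u_p for all n), then there is an accepting run of A of the form: read u₀, then a path using only letters of B₁ that contains a loop traversing each letter of B₁, then u₁, …, then a path in B_p with a loop using every letter of B_p, then u_p. (Existence of a (u⃗,B⃗)-path.) -/

import Mathlib

def content {A : Type*} (w : List A) : Set A := {a | a ∈ w}

def exactLang {A : Type*} (B : Set A) : Language A := {w | content w = B}

def patternLang {A : Type*} : List (List A) → List (Set A) → ℕ → Language A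
  | [u0], [], _ => {u0}
  | u0 :: us, b :: bs, n => {u0} * (exactLang b) ^ n * patternLang us bs n
  | _, _, _ => (0 : Language A)

/-- a `(⊆B)`-path from `p` to `q`: all transitions labeled by letters of `B`. -/
def SubPath {A σ : Type*} (M : NFA A σ) (B : Set A) (p q : σ) : Prop :=
  ∃ w : List A, (∀ a ∈ w, a ∈ B) ∧ q ∈ M.evalFrom {p} w

/-- an `(=B)`-loop around `q`: a cycle labeled by a word of content exactly `B`. -/
def EqLoop {A σ : Type*} (M : NFA A σ) (B : Set A) (q : σ) : Prop :=
  ∃ w : List A, content w = B ∧ q ∈ M.evalFrom {q} w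

/-- a `(u⃗, B⃗)`-path starting at state `p`: read `u₀`, then a `(⊆B₁)`-path through
a state carrying an `(=B₁)`-loop, then `u₁`, …, ending in an accepting state. -/
def UBPath {A σ : Type*} (M : NFA A σ) : List (List A) → List (Set A) → σ → Prop
  | [u0], [], p => ∃ f ∈ M.accept, f ∈ M.evalFrom {p} u0
  | u0 :: us, b :: bs, p => ∃ q1 q2 q3 : σ, q1 ∈ M.evalFrom {p} u0 ∧
      SubPath M b q1 q2 ∧ EqLoop M b q2 ∧ SubPath M b q2 q3 ∧ UBPath M us bs q3
  | _, _, _ => False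

section Helpers

variable {A σ : Type*} (M : NFA A σ)

lemma myEvalFrom_append (S : Set σ) (x y : List A) :
    M.evalFrom S (x ++ y) = M.evalFrom (M.evalFrom S x) y :=
  List.foldl_append

lemma mem_myEvalFrom_iff {S : Set σ} {w : List A} {f : σ} :
    f ∈ M.evalFrom S w ↔ ∃ s ∈ S, f ∈ M.evalFrom {s} w := by
  induction w generalizing S with
  | nil => simp [NFA.evalFrom]
  | cons a w ih =>
    have hstep : ∀ T : Set σ, M.evalFrom T (a :: w) = M.evalFrom (M.stepSet T a) w :=
      fun _ => rfl
    rw [hstep, ih]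
    constructor
    · rintro ⟨t, ht, hf⟩
      rw [NFA.mem_stepSet] at ht
      obtain ⟨s, hs, hts⟩ := ht
      refine ⟨s, hs, ?_⟩
      rw [hstep, ih]
      exact ⟨t, by rw [NFA.mem_stepSet]; exact ⟨s, rfl, hts⟩, hf⟩
    · rintro ⟨s, hs, hf⟩
      rw [hstep, ih] at hf
      obtain ⟨t, ht, hf⟩ := hf
      rw [NFA.mem_stepSet] at ht
      obtain ⟨s', hs', hts⟩ := ht
      have hts' : t ∈ M.step s a := (Set.mem_singleton_iff.mp hs') ▸ hts
      have hmem : t ∈ M.stepSet S a := by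
        rw [NFA.mem_stepSet]; exact ⟨s, hs, hts'⟩
      exact ⟨t, hmem, hf⟩

lemma myEvalFrom_trans {p q r : σ} {x y : List A}
    (h1 : q ∈ M.evalFrom {p} x) (h2 : r ∈ M.evalFrom {q} y) :
    r ∈ M.evalFrom {p} (x ++ y) := by
  rw [myEvalFrom_append, mem_myEvalFrom_iff]
  exact ⟨q, h1, h2⟩

lemma chain_exists (L : List (List A)) (r t : σ) (h : t ∈ M.evalFrom {r} L.flatten) :
    ∃ g : ℕ → σ, g 0 = r ∧ g L.length = t ∧
      ∀ i, i < L.length → g (i + 1) ∈ M.evalFrom {g i} (L.getD i []) := by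
  induction L generalizing r with
  | nil =>
    simp only [List.flatten_nil, NFA.evalFrom_nil, Set.mem_singleton_iff] at h
    exact ⟨fun _ => r, rfl, h.symm, fun i hi => by simp at hi⟩
  | cons x L ih =>
    rw [List.flatten_cons, myEvalFrom_append, mem_myEvalFrom_iff] at h
    obtain ⟨q, hq, ht⟩ := h
    obtain ⟨g, hg0, hgl, hg⟩ := ih q ht
    refine ⟨fun i => if i = 0 then r else g (i - 1), by simp, by simp [hgl], ?_⟩
    intro i hi
    match i with
    | 0 => simpa [hg0] using hq
    | (k+1) =>
      simpa using hg k (by simpa using hi)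

lemma seg (L : List (List A)) (g : ℕ → σ)
    (hg : ∀ i, i < L.length → g (i + 1) ∈ M.evalFrom {g i} (L.getD i [])) :
    ∀ j i, i ≤ j → j ≤ L.length → g j ∈ M.evalFrom {g i} ((L.take j).drop i).flatten := by
  intro j
  induction j with
  | zero =>
    intro i hij _
    interval_cases i
    simp [NFA.evalFrom]
  | succ j ihj =>
    intro i hij hj
    rcases Nat.lt_or_ge i (j + 1) with hlt | hge
    · have hij' : i ≤ j := Nat.lt_succ_iff.mp hlt
      have hjlen : j < L.length := hj
      have h1 := ihj i hij' (le_of_lt hjlen)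
      have h2 := hg j hjlen
      have htake : L.take (j + 1) = L.take j ++ [L.getD j []] := by
        rw [List.take_succ]
        congr 1
        have : L[j]? = some (L.getD j []) := by
          rw [List.getD_eq_getElem _ _ hjlen]
          exact List.getElem?_eq_getElem hjlen
        rw [this]
        rfl
      have hdrop : (L.take (j + 1)).drop i = (L.take j).drop i ++ [L.getD j []] := by
        rw [htake, List.drop_append_of_le_length]
        simp
        omega
      rw [hdrop, List.flatten_append]
      exact myEvalFrom_trans M h1 (by simpa using h2)
    · have : i = j + 1 := le_antisymm hij hge
      subst this
      have : (L.take (j + 1)).drop (j + 1) = [] := by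
        apply List.drop_eq_nil_of_le
        simp
      rw [this]
      simp [NFA.evalFrom]

lemma content_append (x y : List A) : content (x ++ y) = content x ∪ content y := by
  ext a; simp [content]

lemma content_flatten_eq {b : Set A} (L : List (List A)) (hL : L ≠ [])
    (h : ∀ x ∈ L, content x = b) : content L.flatten = b := by
  induction L with
  | nil => exact absurd rfl hL
  | cons x L ih =>
    rcases eq_or_ne L [] with rfl | hne
    · simpa using h x (by simp)
    · rw [List.flatten_cons, content_append, h x (by simp),
        ih hne (fun y hy => h y (by simp [hy]))]
      simp

lemma loop_of_long [Fintype σ] (b : Set A) (L : List (List A))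
    (hlen : Fintype.card σ < L.length) (hc : ∀ x ∈ L, content x = b) (r t : σ)
    (h : t ∈ M.evalFrom {r} L.flatten) :
    ∃ q2, SubPath M b r q2 ∧ EqLoop M b q2 ∧ SubPath M b q2 t := by
  obtain ⟨g, hg0, hgl, hg⟩ := chain_exists M L r t h
  obtain ⟨i, j, hne, heq⟩ := Fintype.exists_ne_map_eq_of_card_lt
    (fun i : Fin (L.length + 1) => g i) (by simp; omega)
  have key : ∀ i j : ℕ, i < j → j ≤ L.length → g i = g j →
      ∃ q2, SubPath M b r q2 ∧ EqLoop M b q2 ∧ SubPath M b q2 t := by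
    intro i j hij hj heq
    have hsub : ∀ (k m : ℕ) (x : List A), x ∈ (L.take k).drop m → ∀ a ∈ x, a ∈ b := by
      intro k m x hx a ha
      have hxL : x ∈ L := List.mem_of_mem_take (List.mem_of_mem_drop hx)
      have := hc x hxL
      rw [← this]; exact ha
    refine ⟨g i, ⟨((L.take i).drop 0).flatten, ?_, ?_⟩, ?_, ?_⟩
    · intro a ha
      obtain ⟨x, hx, hax⟩ := List.mem_flatten.mp ha
      exact hsub i 0 x hx a hax
    · rw [← hg0]
      exact seg M L g hg i 0 (Nat.zero_le _) (by omega)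
    · refine ⟨((L.take j).drop i).flatten, ?_, ?_⟩
      · apply content_flatten_eq _ _ (fun x hx => hc x
          (List.mem_of_mem_take (List.mem_of_mem_drop hx)))
        intro hnil
        have : ((L.take j).drop i).length = 0 := by rw [hnil]; rfl
        rw [List.length_drop, List.length_take] at this
        omega
      · have := seg M L g hg j i (le_of_lt hij) hj
        rwa [← heq] at this
    · refine ⟨((L.take L.length).drop i).flatten, ?_, ?_⟩
      · intro a ha
        obtain ⟨x, hx, hax⟩ := List.mem_flatten.mp ha
        exact hsub L.length i x hx a hax
      · rw [← hgl]
        exact seg M L g hg L.length i (by omega) le_rfl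
  rcases hne.lt_or_gt with hij | hij
  · exact key i j hij (by omega) heq
  · exact key j i hij (by omega) heq.symm

lemma main_aux [Fintype σ] (M : NFA A σ) :
    ∀ (B : List (Set A)) (u : List (List A)), u.length = B.length + 1 →
    ∀ (w : List A) (S : Set σ), w ∈ patternLang u B (Fintype.card σ + 1) →
    (∃ f ∈ M.accept, f ∈ M.evalFrom S w) → ∃ s ∈ S, UBPath M u B s := by
  intro B
  induction B with
  | nil =>
    intro u hu w S hw hacc
    obtain ⟨u0, rfl⟩ : ∃ u0, u = [u0] := by
      match u, hu with
      | [u0], _ => exact ⟨u0, rfl⟩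
    have hw' : w = u0 := by simp only [patternLang] at hw; exact hw
    subst hw'
    obtain ⟨f, hf, hfe⟩ := hacc
    rw [mem_myEvalFrom_iff] at hfe
    obtain ⟨s, hs, hse⟩ := hfe
    exact ⟨s, hs, f, hf, hse⟩
  | cons b bs ih =>
    intro u hu w S hw hacc
    obtain ⟨u0, us, rfl⟩ : ∃ u0 us, u = u0 :: us := by
      match u, hu with
      | u0 :: us, _ => exact ⟨u0, us, rfl⟩
    have hu' : us.length = bs.length + 1 := by simpa using hu
    have hw' : w ∈ {u0} * (exactLang b) ^ (Fintype.card σ + 1) *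
        patternLang us bs (Fintype.card σ + 1) := by
      have hus : us ≠ [] := by intro h; rw [h] at hu'; simp at hu'
      match us, hus with
      | v :: vs, _ => exact hw
    rw [Language.mem_mul] at hw'
    obtain ⟨v, hv, w2, hw2, rfl⟩ := hw'
    rw [Language.mem_mul] at hv
    obtain ⟨u0', hu0', y, hy, rfl⟩ := hv
    rcases Set.mem_singleton_iff.mp hu0' with rfl
    rw [Language.mem_pow] at hy
    obtain ⟨L, rfl, hLlen, hLmem⟩ := hy
    obtain ⟨f, hf, hfe⟩ := hacc
    rw [mem_myEvalFrom_iff] at hfe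
    obtain ⟨s, hs, hse⟩ := hfe
    rw [myEvalFrom_append, mem_myEvalFrom_iff] at hse
    obtain ⟨t, ht, hft⟩ := hse
    rw [myEvalFrom_append, mem_myEvalFrom_iff] at ht
    obtain ⟨q1, hq1, htq1⟩ := ht
    have hcL : ∀ x ∈ L, content x = b := fun x hx => hLmem x hx
    obtain ⟨q2, hsub1, hloop, hsub2⟩ :=
      loop_of_long M b L (by omega) hcL q1 t htq1
    obtain ⟨s', hs', hub⟩ := ih us hu' w2 {t} hw2 ⟨f, hf, hft⟩
    have hst : s' = t := Set.mem_singleton_iff.mp hs'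
    subst hst
    refine ⟨s, hs, ?_⟩
    obtain ⟨v, vs, rfl⟩ : ∃ v vs, us = v :: vs := by
      match us, hu' with
      | v :: vs, _ => exact ⟨v, vs, rfl⟩
    show ∃ q1 q2 q3 : σ, q1 ∈ M.evalFrom {s} u0' ∧
      SubPath M b q1 q2 ∧ EqLoop M b q2 ∧ SubPath M b q2 q3 ∧ UBPath M (v :: vs) bs q3
    exact ⟨q1, q2, s', hq1, hsub1, hloop, hsub2, hub⟩

end Helpers

/-- if `L(M)` meets `u₀(B₁!)ⁿu₁⋯(B_p!)ⁿu_p` for every `n`, then `M`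
admits a `(u⃗, B⃗)`-path (from some initial state to an accepting state). -/
theorem exists_ub_path {A σ : Type*} [Fintype σ] (M : NFA A σ)
    (u : List (List A)) (B : List (Set A))
    (hu : u.length = B.length + 1) (hBne : ∀ b ∈ B, b.Nonempty)
    (h : ∀ n, ∃ w ∈ patternLang u B n, w ∈ M.accepts) :
    ∃ s ∈ M.start, UBPath M u B s := by
  obtain ⟨w, hw, hacc⟩ := h (Fintype.card σ + 1)
  rw [NFA.mem_accepts] at hacc
  exact main_aux M B u hu w M.start hw hacc
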